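/- arXiv:2312.05226 — 2 statements merged into one kernel-verified Lean document; each statement's English description precedes it below -/
import Mathlib

section
/- Let m be a positive odd integer, let A ∈ ℝ satisfy A^m = −1/m, and let c ∈ ℝ. Define u : {t ∈ ℝ : t > 0} × ℝ → ℝ by u(t, x) = A·(x + c)·t^{−1/m}. Then u satisfies the nonlinear PDE ∂u/∂t = u·(∂u/∂x)^m at every point (t, x) with t > 0. -/
/-- For odd `m`, `A^m = -1/m` and any `c`, the function
`u(t,x) = A·(x+c)·t^(-1/m)` satisfies `∂u/∂t = u·(∂u/∂x)^m` for all `t > 0`. -/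
theorem singular_solution_of_nonlinear_pde
    (m : ℕ) (hm : Odd m) (A c : ℝ) (hA : A ^ m = -(1 / (m : ℝ)))
    (t x : ℝ) (ht : 0 < t) :
    HasDerivAt (fun s : ℝ => A * (x + c) * s ^ (-1 / (m : ℝ)))
      ((A * (x + c) * t ^ (-1 / (m : ℝ))) *
        (deriv (fun y : ℝ => A * (y + c) * t ^ (-1 / (m : ℝ))) x) ^ m) t := by
  have hm0 : (m : ℝ) ≠ 0 := Nat.cast_ne_zero.mpr hm.pos.ne'
  set p : ℝ := -1 / (m : ℝ) with hp
  -- spatial derivative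
  have hx : HasDerivAt (fun y : ℝ => A * (y + c) * t ^ p) (A * t ^ p) x := by
    have h := (((hasDerivAt_id x).add_const c).const_mul (A * t ^ p))
    simpa [mul_one, mul_comm, mul_left_comm, mul_assoc] using h
  have hderiv : deriv (fun y : ℝ => A * (y + c) * t ^ p) x = A * t ^ p := hx.deriv
  rw [hderiv]
  -- time derivative
  have h := (Real.hasDerivAt_rpow_const (x := t) (p := p) (Or.inl ht.ne')).const_mul
    (A * (x + c))
  refine h.congr_deriv ?_
  have hpow : (t ^ p) ^ m = t ^ (-1 : ℝ) := by
    rw [← Real.rpow_natCast (t ^ p) m, ← Real.rpow_mul ht.le]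
    congr 1
    rw [hp]; field_simp
  have hsub : t ^ (p - 1) = t ^ p * t ^ (-1 : ℝ) := by
    rw [show p - 1 = p + (-1) by ring, Real.rpow_add ht]
  rw [mul_pow, hA, hpow, hsub]
  ring
end

section
/- Let k be a field of characteristic zero and c ∈ k. Define the k-linear endomorphism L_c of the formal power series ring k[[z]] by L_c(g) = g − (z + c)·g′, where g′ is the formal derivative. Then: (1) the kernel of L_c is the one-dimensional subspace k·(z + c); (2) L_c is surjective if and only if c ≠ 0; in particular, when c = 0 the element z does not lie in the image of L_0. -/
open PowerSeries

private lemma coeffL {k : Type*} [Field k] (c : k) (g : PowerSeries k) (n : ℕ) :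
    (PowerSeries.coeff n) (g - (PowerSeries.X + PowerSeries.C c) * PowerSeries.derivative k g)
      = (1 - (n : k)) * PowerSeries.coeff n g
        - c * ((n : k) + 1) * PowerSeries.coeff (n + 1) g := by
  rw [map_sub, add_mul, map_add]
  cases n with
  | zero =>
      rw [PowerSeries.coeff_zero_X_mul, PowerSeries.coeff_C_mul, PowerSeries.coeff_derivative]
      push_cast
      ring
  | succ m =>
      rw [PowerSeries.coeff_succ_X_mul, PowerSeries.coeff_C_mul,
        PowerSeries.coeff_derivative, PowerSeries.coeff_derivative]
      push_cast
      ring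

private lemma coeff_smul_XC {k : Type*} [Field k] (c a : k) (n : ℕ) :
    (PowerSeries.coeff n) (a • (PowerSeries.X + PowerSeries.C c))
      = if n = 0 then a * c else if n = 1 then a else 0 := by
  rw [map_smul, map_add, PowerSeries.coeff_X, PowerSeries.coeff_C]
  rcases n with _ | _ | n <;> simp [smul_eq_mul, mul_comm]

/-- For `L_c(g) = g − (z+c)·g′` on `k[[z]]` (char 0):
(1) `ker L_c = k·(z+c)`; (2) `L_c` is surjective iff `c ≠ 0`; in particular for `c = 0`
the element `z` is not in the image of `L_0`. -/
theorem clairaut_linearization_kernel_and_surjectivity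
    (k : Type*) [Field k] [CharZero k] (c : k) :
    (∀ g : PowerSeries k,
        g - (PowerSeries.X + PowerSeries.C c) * PowerSeries.derivative k g = 0 ↔
          ∃ a : k, g = a • (PowerSeries.X + PowerSeries.C c)) ∧
    ((Function.Surjective fun g : PowerSeries k =>
        g - (PowerSeries.X + PowerSeries.C c) * PowerSeries.derivative k g) ↔ c ≠ 0) ∧
    (c = 0 → ∀ g : PowerSeries k,
        g - (PowerSeries.X + PowerSeries.C c) * PowerSeries.derivative k g
          ≠ PowerSeries.X) := by
  have key3 : c = 0 → ∀ g : PowerSeries k,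
      g - (PowerSeries.X + PowerSeries.C c) * PowerSeries.derivative k g
        ≠ PowerSeries.X := by
    intro hc g hg
    have h1 := congrArg (PowerSeries.coeff 1) hg
    rw [coeffL, hc, PowerSeries.coeff_X] at h1
    simp at h1
  refine ⟨?_, ⟨?_, fun hsurj => ?_⟩, key3⟩
  · intro g
    constructor
    · intro hg
      have H : ∀ n : ℕ, (1 - (n : k)) * PowerSeries.coeff n g
          - c * ((n : k) + 1) * PowerSeries.coeff (n + 1) g = 0 := by
        intro n
        rw [← coeffL, hg, map_zero]
      have hzero : ∀ n : ℕ, 2 ≤ n → PowerSeries.coeff n g = 0 := by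
        rcases eq_or_ne c 0 with hc | hc
        · intro n hn
          have h1 : (1 - (n : k)) ≠ 0 := by
            rw [sub_ne_zero]
            intro hh
            exact (by omega : n ≠ 1) (by exact_mod_cast hh.symm)
          have := H n
          rw [hc, zero_mul, zero_mul, sub_zero] at this
          exact (mul_eq_zero.mp this).resolve_left h1
        · intro n hn
          induction n with
          | zero => omega
          | succ m ih =>
              have hm : c * ((m : k) + 1) ≠ 0 :=
                mul_ne_zero hc (Nat.cast_add_one_ne_zero m)
              rcases Nat.lt_or_ge m 2 with h2 | h2
              · have hm1 : m = 1 := by omega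
                subst hm1
                have := H 1
                norm_num at this
                rcases this with h | h
                · exact absurd h hc
                · exact h
              · have := H m
                rw [ih h2, mul_zero, zero_sub, neg_eq_zero] at this
                rcases mul_eq_zero.mp this with h | h
                · exact absurd h hm
                · exact h
      refine ⟨PowerSeries.coeff 1 g, ?_⟩
      ext n
      rw [coeff_smul_XC]
      rcases n with _ | _ | n
      · have h0 := H 0
        norm_num at h0
        norm_num
        linear_combination h0
      · simp
      · exact hzero (n + 2) (by omega)
    · rintro ⟨a, rfl⟩
      ext n
      rw [coeffL, coeff_smul_XC, coeff_smul_XC, map_zero]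
      rcases n with _ | _ | n <;> simp <;> ring
  · intro hsurj
    by_contra hc
    obtain ⟨g, hg⟩ := hsurj PowerSeries.X
    exact key3 hc g hg
  · -- c ≠ 0 → surjective
    intro h
    set a : ℕ → k := fun n => Nat.rec 0
      (fun m am => ((1 - (m : k)) * am - PowerSeries.coeff m h) / (c * ((m : k) + 1))) n
      with ha
    refine ⟨PowerSeries.mk a, ?_⟩
    ext n
    rw [coeffL]
    have hne : c * ((n : k) + 1) ≠ 0 :=
      mul_ne_zero hsurj (Nat.cast_add_one_ne_zero n)
    have hrec : a (n + 1) = ((1 - (n : k)) * a n - PowerSeries.coeff n h) / (c * ((n : k) + 1)) := rfl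
    simp only [PowerSeries.coeff_mk, hrec]
    rw [mul_div_cancel₀ _ hne]
    ring
end
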